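/- Given a multiset of at least n - f integer responses where at most f values are arbitrary (faulty) and each honest value is at most M (the maximum clock held by any correct server), the (f+1)-st largest response is at most M. -/

import Mathlib

lemma countP_le_of_indices {α : Type*} (l : List α) (p : α → Bool) (F : Finset ℕ)
    (h : ∀ i : Fin l.length, p (l.get i) → (i : ℕ) ∈ F) :
    l.countP p ≤ F.card := by
  have h1 : l.countP p
      = ((List.finRange l.length).filter (fun i => p (l.get i))).length := by
    conv_lhs => rw [← List.ofFn_get l]
    rw [List.ofFn_eq_map, List.countP_map, List.countP_eq_length_filter]
    rfl
  rw [h1]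
  set s := (List.finRange l.length).filter (fun i => p (l.get i)) with hs
  have hnd : (s.map (Fin.val)).Nodup :=
    (List.Nodup.filter _ (List.nodup_finRange _)).map Fin.val_injective
  have hsub : ∀ x ∈ s.map Fin.val, x ∈ F := by
    intro x hx
    simp only [List.mem_map] at hx
    obtain ⟨i, hi, rfl⟩ := hx
    exact h i (by simpa using (List.mem_filter.mp hi).2)
  calc s.length = (s.map Fin.val).toFinset.card := by
        rw [List.toFinset_card_of_nodup hnd, List.length_map]
    _ ≤ F.card := Finset.card_le_card (fun x hx => hsub x (List.mem_toFinset.mp hx))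

/-- The (f+1)-st largest of at least n-f responses, at most f of which are
faulty and the rest bounded by M, is at most M. -/
theorem f1st_largest_le_bound
    (n f : ℕ) (M : ℤ) (L : List ℤ)
    (h4f : n ≥ 4 * f + 1)
    (hlen : n - f ≤ L.length)
    (F : Finset ℕ) (hF : F.card ≤ f)
    (hhonest : ∀ i : Fin L.length, (i : ℕ) ∉ F → L.get i ≤ M)
    (L' : List ℤ) (hperm : L'.Perm L) (hsorted : L'.Pairwise (· ≥ ·))
    (t : ℤ) (ht : L'[f]? = some t) :
    t ≤ M := by
  by_contra hMt
  push_neg at hMt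
  obtain ⟨hf, hget⟩ := List.getElem?_eq_some_iff.mp ht
  set p : ℤ → Bool := fun x => decide (M < x) with hp
  -- upper bound
  have hub : L.countP p ≤ f := by
    refine le_trans (countP_le_of_indices L p F ?_) hF
    intro i hi
    by_contra hiF
    have := hhonest i hiF
    simp [hp, List.get_eq_getElem] at hi this
    omega
  -- lower bound
  have htake : ∀ x ∈ L'.take (f + 1), p x := by
    intro x hx
    obtain ⟨i, hi, rfl⟩ := List.mem_take_iff_getElem.mp hx
    have hi' : i < L'.length := lt_of_lt_of_le hi (min_le_right _ _)
    have hle : i ≤ f := by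
      have := lt_of_lt_of_le hi (min_le_left _ _); omega
    have : L'.get ⟨i, hi'⟩ ≥ L'.get ⟨f, hf⟩ :=
      List.Pairwise.rel_get_of_le hsorted hle
    simp only [List.get_eq_getElem, Fin.val_mk, hget] at this
    simp only [hp, List.get_eq_getElem] at *
    simp only [decide_eq_true_eq]
    omega
  have hlb : f + 1 ≤ L'.countP p := by
    have h1 : (L'.take (f + 1)).countP p = (L'.take (f + 1)).length := by
      rw [List.countP_eq_length_filter, List.length_filter_eq_length_iff.mpr htake]
    have h2 : (L'.take (f + 1)).length = f + 1 := by
      rw [List.length_take]; omega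
    calc f + 1 = (L'.take (f + 1)).countP p := by rw [h1, h2]
      _ ≤ L'.countP p := by
          conv_rhs => rw [← List.take_append_drop (f + 1) L']
          rw [List.countP_append]; omega
  have := hperm.countP_eq p
  omega
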